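/- For every rational tangle word (a_1, …, a_n): no two consecutive syllables are both SI syllables, and every maximal run of NSI syllables other than the last one consists of (a) a single even syllable, (b) two consecutive odd syllables, or (c) an odd syllable, followed by a nonempty string of even syllables, followed by a final odd syllable. -/
import Mathlib


/-- The three connectivity states of a partially built rational tangle:
`H = {NW–NE, SW–SE}`, `V = {NW–SW, NE–SE}`, `X = {NW–SE, NE–SW}`. -/
inductive TState : Type
  | H
  | V
  | X
  deriving DecidableEq

/-- Effect of a bottom crossing (a twist of SW and SE) on the connectivity state. -/
def bstep : TState → TState
  | .H => .H
  | .V => .X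
  | .X => .V

/-- Effect of a right crossing (a twist of NE and SE) on the connectivity state. -/
def rstep : TState → TState
  | .V => .V
  | .H => .X
  | .X => .H

/-- `step true` is a bottom crossing, `step false` is a right crossing. -/
def step : Bool → TState → TState
  | true => bstep
  | false => rstep

/-- The twist direction of the (0-based) `i`-th syllable: bottom iff `i` is even
(1-based odd syllables are bottom twists). -/
def sylDir (i : ℕ) : Bool := decide (i % 2 = 0)

/-- The state in which a crossing of the (0-based) `i`-th syllable is a self-intersection:
`H` for bottom syllables, `V` for right syllables. -/
def siState (i : ℕ) : TState := if i % 2 = 0 then TState.H else TState.V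

/-- Process a list of syllables starting from state `s`; the Boolean `b` records
whether the next syllable is a bottom syllable. Each syllable `a` applies
`|a|` crossings of the appropriate direction. -/
def runWord : List ℤ → Bool → TState → TState
  | [], _, s => s
  | a :: t, b, s => runWord t (!b) ((step b)^[a.natAbs] s)

/-- The connectivity state at the start of the (0-based) `i`-th syllable of the word `w`
(a rational tangle word starts in state `V`). -/
def stateAt (w : List ℤ) (i : ℕ) : TState := runWord (w.take i) true TState.V

/-- The (0-based) `i`-th syllable of `w` is an SI syllable. -/
def IsSISyl (w : List ℤ) (i : ℕ) : Prop := stateAt w i = siState i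

instance (w : List ℤ) (i : ℕ) : Decidable (IsSISyl w i) :=
  inferInstanceAs (Decidable (_ = _))

/-- `IsNSIRun w l r` : the syllables with (0-based) indices in `[l, r)` form a maximal run
of NSI syllables of `w`. -/
def IsNSIRun (w : List ℤ) (l r : ℕ) : Prop :=
  l < r ∧ r ≤ w.length ∧ (∀ j, l ≤ j → j < r → ¬ IsSISyl w j) ∧
    (l = 0 ∨ IsSISyl w (l - 1)) ∧ (r = w.length ∨ IsSISyl w r)

/-- The last maximal run of NSI syllables: a maximal run such that every later syllable
is an SI syllable. -/
def IsLastNSIRun (w : List ℤ) (l r : ℕ) : Prop :=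
  IsNSIRun w l r ∧ ∀ j, r ≤ j → j < w.length → IsSISyl w j

/-- Run shape (a): a single even syllable. -/
def RunA (w : List ℤ) (l r : ℕ) : Prop := r = l + 1 ∧ Even (w.getD l 0)

/-- Run shape (b): two consecutive odd syllables. -/
def RunB (w : List ℤ) (l r : ℕ) : Prop :=
  r = l + 2 ∧ Odd (w.getD l 0) ∧ Odd (w.getD (l + 1) 0)

/-- Run shape (c): an odd syllable, then a nonempty string of even syllables,
then a final odd syllable. -/
def RunC (w : List ℤ) (l r : ℕ) : Prop :=
  l + 3 ≤ r ∧ Odd (w.getD l 0) ∧ Odd (w.getD (r - 1) 0) ∧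
    ∀ j, l < j → j < r - 1 → Even (w.getD j 0)

/-- Run shape (a'): a single odd syllable. -/
def RunA' (w : List ℤ) (l r : ℕ) : Prop := r = l + 1 ∧ Odd (w.getD l 0)

/-- Run shape (b'): an odd syllable followed by a nonempty string of even syllables. -/
def RunB' (w : List ℤ) (l r : ℕ) : Prop :=
  l + 2 ≤ r ∧ Odd (w.getD l 0) ∧ ∀ j, l < j → j < r → Even (w.getD j 0)

lemma runWord_append (l m : List ℤ) (b : Bool) (s : TState) :
    runWord (l ++ m) b s = runWord m ((!·)^[l.length] b) (runWord l b s) := by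
  induction l generalizing b s with
  | nil => rfl
  | cons a t ih =>
    simp only [List.cons_append, List.append_eq, runWord, ih, List.length_cons,
      Function.iterate_succ_apply]

lemma not_iterate (i : ℕ) : (!·)^[i] true = sylDir i := by
  induction i with
  | zero => rfl
  | succ n ih =>
    rw [Function.iterate_succ_apply', ih]
    rcases Nat.mod_two_eq_zero_or_one n with h | h <;>
      simp [sylDir, h, Nat.add_mod]

lemma stateAt_succ (w : List ℤ) (i : ℕ) (hi : i < w.length) :
    stateAt w (i+1) = (step (sylDir i))^[(w.getD i 0).natAbs] (stateAt w i) := by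
  unfold stateAt
  rw [List.take_succ, runWord_append, List.length_take, min_eq_left hi.le,
    not_iterate, List.getElem?_eq_getElem hi, List.getD_eq_getElem w 0 hi]
  rfl

lemma step_step (b : Bool) (s : TState) : step b (step b s) = s := by
  cases b <;> cases s <;> rfl

lemma step_iterate (b : Bool) (n : ℕ) (s : TState) :
    (step b)^[n] s = if n % 2 = 0 then s else step b s := by
  induction n with
  | zero => simp
  | succ m ih =>
    rw [Function.iterate_succ_apply', ih]
    rcases Nat.mod_two_eq_zero_or_one m with h | h <;>
      simp [h, Nat.add_mod, step_step]

lemma even_getD_iff (a : ℤ) : a.natAbs % 2 = 0 ↔ Even a := by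
  rw [← Nat.even_iff, Int.natAbs_even]

lemma siState_ne_X (i : ℕ) : siState i ≠ TState.X := by
  unfold siState; split <;> simp

lemma siState_succ_ne (i : ℕ) : siState (i+1) ≠ siState i := by
  unfold siState
  rcases Nat.mod_two_eq_zero_or_one i with h | h <;>
    simp [h, Nat.add_mod]

lemma siState_add_two (i : ℕ) : siState (i+2) = siState i := by
  unfold siState; rw [Nat.add_mod_right]

lemma trans_SI (w : List ℤ) (i : ℕ) (hi : i < w.length)
    (h : stateAt w i = siState i) : stateAt w (i+1) = siState i := by
  rw [stateAt_succ w i hi, step_iterate, h]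
  have hs : step (sylDir i) (siState i) = siState i := by
    unfold sylDir siState
    rcases Nat.mod_two_eq_zero_or_one i with h | h <;> simp [h] <;> rfl
  split <;> simp [hs]

lemma trans_O (w : List ℤ) (i : ℕ) (hi : i < w.length)
    (h : stateAt w i = siState (i+1)) :
    stateAt w (i+1) = if Even (w.getD i 0) then siState (i+1) else TState.X := by
  rw [stateAt_succ w i hi, step_iterate, h]
  have hs : step (sylDir i) (siState (i+1)) = TState.X := by
    unfold sylDir siState
    rcases Nat.mod_two_eq_zero_or_one i with h | h <;> simp [h, Nat.add_mod] <;> rfl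
  rcases Nat.mod_two_eq_zero_or_one (w.getD i 0).natAbs with h2 | h2
  · rw [if_pos h2, if_pos ((even_getD_iff _).mp h2)]
  · rw [if_neg (by omega), hs,
      if_neg (by rw [← even_getD_iff]; omega)]

lemma trans_X (w : List ℤ) (i : ℕ) (hi : i < w.length)
    (h : stateAt w i = TState.X) :
    stateAt w (i+1) = if Even (w.getD i 0) then TState.X else siState (i+1) := by
  rw [stateAt_succ w i hi, step_iterate, h]
  have hs : step (sylDir i) TState.X = siState (i+1) := by
    unfold sylDir siState
    rcases Nat.mod_two_eq_zero_or_one i with h | h <;> simp [h, Nat.add_mod] <;> rfl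
  rcases Nat.mod_two_eq_zero_or_one (w.getD i 0).natAbs with h2 | h2
  · rw [if_pos h2, if_pos ((even_getD_iff _).mp h2)]
  · rw [if_neg (by omega), hs,
      if_neg (by rw [← even_getD_iff]; omega)]

/-- in a rational tangle word, no two consecutive syllables are both SI
syllables, and every maximal run of NSI syllables other than the last one consists of
(a) a single even syllable, (b) two consecutive odd syllables, or (c) an odd syllable,
a nonempty string of even syllables, and a final odd syllable. -/
theorem nonlast_run_shapes (w : List ℤ) :
    (∀ i : ℕ, i + 1 < w.length → IsSISyl w i → ¬ IsSISyl w (i + 1)) ∧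
    (∀ l r : ℕ, IsNSIRun w l r →
      (∃ j, r ≤ j ∧ j < w.length ∧ ¬ IsSISyl w j) →
      RunA w l r ∨ RunB w l r ∨ RunC w l r) := by
  constructor
  · intro i hi hSI hSI'
    have h1 := trans_SI w i (by omega) hSI
    rw [IsSISyl, h1] at hSI'
    exact siState_succ_ne i hSI'.symm
  · intro l r hrun hj
    obtain ⟨hlr, hrlen, hNSI, hstart, hend⟩ := hrun
    obtain ⟨j, hrj, hjlen, _⟩ := hj
    have hrlt : r < w.length := lt_of_le_of_lt hrj hjlen
    have hSIr : IsSISyl w r := hend.resolve_left (by omega)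
    have hllen : l < w.length := lt_of_lt_of_le hlr hrlen
    have hO : stateAt w l = siState (l+1) := by
      rcases Nat.eq_zero_or_pos l with h0 | hpos
      · subst h0; rfl
      · have hSIl : IsSISyl w (l-1) := hstart.resolve_left (by omega)
        have hl1 : l - 1 < w.length := by omega
        have h2 := trans_SI w (l-1) hl1 hSIl
        have hl : l - 1 + 1 = l := by omega
        rw [hl] at h2
        rw [h2]
        have : l + 1 = (l - 1) + 2 := by omega
        rw [this, siState_add_two]
    by_cases he : Even (w.getD l 0)
    · left
      have h1 : stateAt w (l+1) = siState (l+1) := by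
        rw [trans_O w l hllen hO, if_pos he]
      have hr1 : r = l + 1 := by
        by_contra hne
        exact hNSI (l+1) (by omega) (by omega) h1
      exact ⟨hr1, he⟩
    · have hol : Odd (w.getD l 0) := Int.not_even_iff_odd.mp he
      have hX1 : stateAt w (l+1) = TState.X := by
        rw [trans_O w l hllen hO, if_neg he]
      have aux : ∀ n j, r - j = n → l + 1 ≤ j → j ≤ r → stateAt w j = TState.X →
          (∀ k, l < k → k < j → Even (w.getD k 0)) →
          RunB w l r ∨ RunC w l r := by
        intro n
        induction n with
        | zero =>
          intro j hn _ hjr hX _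
          have hjr' : j = r := by omega
          subst hjr'
          rw [IsSISyl, hX] at hSIr
          exact absurd hSIr.symm (siState_ne_X j)
        | succ n ih =>
          intro j hn hlj hjr hX hev
          have hjr' : j < r := by omega
          have hjlen' : j < w.length := by omega
          by_cases he2 : Even (w.getD j 0)
          · refine ih (j+1) (by omega) (by omega) (by omega) ?_ ?_
            · rw [trans_X w j hjlen' hX, if_pos he2]
            · intro k hk1 hk2
              rcases Nat.lt_or_ge k j with hk | hk
              · exact hev k hk1 hk
              · have : k = j := by omega
                rw [this]; exact he2
          · have hSI1 : IsSISyl w (j+1) := by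
              rw [IsSISyl, trans_X w j hjlen' hX, if_neg he2]
            have hrj1 : r = j + 1 := by
              by_contra hne
              exact hNSI (j+1) (by omega) (by omega) hSI1
            have hoj : Odd (w.getD j 0) := Int.not_even_iff_odd.mp he2
            rcases Nat.lt_or_ge (l+1) j with hgt | hle
            · right
              refine ⟨by omega, hol, ?_, ?_⟩
              · have : r - 1 = j := by omega
                rw [this]; exact hoj
              · intro k hk1 hk2
                exact hev k hk1 (by omega)
            · left
              have hjl : j = l + 1 := by omega
              exact ⟨by omega, hol, by rw [← hjl]; exact hoj⟩
      exact Or.inr (aux (r - (l+1)) (l+1) rfl le_rfl (by omega) hX1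
        (fun k hk1 hk2 => absurd hk2 (by omega)))
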